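/- Let G be a finite group and H ≤ G a subgroup. If ρ is an irreducible complex representation of G chosen according to the Plancherel measure and X_H = ⟨Res_H χ_ρ, 1⟩_H / d_ρ, then Pr_ρ[X_H = 0] ≤ |H| · Σ_{h ∈ H, h ≠ 1} 1/|h^G|, where h^G denotes the conjugacy class of h in G. -/

import Mathlib

open CategoryTheory
open scoped Classical

noncomputable section PlancherelAux

open Module

namespace PlancherelAux

variable {G : Type} [Group G] [Fintype G]

lemma rho_mul_apply (V : FDRep ℂ G) (a b : G) (v : V) :
    V.ρ (a * b) v = V.ρ a (V.ρ b v) := by rw [map_mul]; rfl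

/-- The subrepresentation attached to an invariant subspace. -/
def subρ (V : FDRep ℂ G) (U : Submodule ℂ V) (hU : ∀ g, ∀ x ∈ U, V.ρ g x ∈ U) :
    Representation ℂ G U where
  toFun g := (V.ρ g).restrict (hU g)
  map_one' := by ext x; simp [LinearMap.restrict_apply]
  map_mul' g h := by ext x; simp [LinearMap.restrict_apply]

/-- The subrepresentation as an object of `FDRep`. -/
def subRep (V : FDRep ℂ G) (U : Submodule ℂ V) (hU : ∀ g, ∀ x ∈ U, V.ρ g x ∈ U) : FDRep ℂ G :=
  FDRep.of (subρ V U hU)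

lemma subRep_ρ_apply (V : FDRep ℂ G) (U : Submodule ℂ V) (hU : ∀ g, ∀ x ∈ U, V.ρ g x ∈ U)
    (g : G) (x : U) : (U.subtype) (((subRep V U hU).ρ g) x) = V.ρ g (U.subtype x) := rfl

/-- Package an equivariant linear map as a morphism of `FDRep`s. -/
def mkHom {V W : FDRep ℂ G} (f : V →ₗ[ℂ] W) (h : ∀ g : G, f.comp (V.ρ g) = (W.ρ g).comp f) :
    V ⟶ W :=
  ⟨FGModuleCat.ofHom f, fun g => by ext x; exact LinearMap.congr_fun (h g) x⟩

/-- The inclusion of a subrepresentation. -/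
def subIncl (V : FDRep ℂ G) (U : Submodule ℂ V) (hU : ∀ g, ∀ x ∈ U, V.ρ g x ∈ U) :
    subRep V U hU ⟶ V :=
  mkHom U.subtype (by intro g; ext x; exact subRep_ρ_apply V U hU g x)

/-- Maschke: every invariant subspace has an invariant complement. -/
lemma exists_invariant_compl (V : FDRep ℂ G) (U : Submodule ℂ V)
    (hU : ∀ g, ∀ x ∈ U, V.ρ g x ∈ U) :
    ∃ W : Submodule ℂ V, (∀ g, ∀ x ∈ W, V.ρ g x ∈ W) ∧ IsCompl U W := by
  obtain ⟨U', hU'⟩ := Submodule.exists_isCompl U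
  set p := U.projectionOnto U' hU' with hp
  set q : V →ₗ[ℂ] V := (Fintype.card G : ℂ)⁻¹ •
    ∑ g : G, (V.ρ g⁻¹).comp ((U.subtype.comp p).comp (V.ρ g)) with hq
  have hqapp : ∀ v, q v = (Fintype.card G : ℂ)⁻¹ •
      ∑ g : G, V.ρ g⁻¹ (U.subtype (p (V.ρ g v))) := by
    intro v; rw [hq]
    simp only [LinearMap.smul_apply, LinearMap.sum_apply, LinearMap.comp_apply]
  have hqmem : ∀ v, q v ∈ U := by
    intro v
    rw [hqapp]
    exact Submodule.smul_mem _ _ (Submodule.sum_mem _ fun g _ =>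
      hU g⁻¹ _ (Submodule.coe_mem _))
  have hqfix : ∀ u ∈ U, q u = u := by
    intro u hu
    rw [hqapp]
    have : ∀ g : G, (V.ρ g⁻¹) (U.subtype (p (V.ρ g u))) = u := by
      intro g
      rw [Submodule.projectionOnto_apply_left hU' ⟨V.ρ g u, hU g u hu⟩]
      show (V.ρ g⁻¹) (V.ρ g u) = u
      rw [← rho_mul_apply, inv_mul_cancel, map_one, Module.End.one_apply]
    rw [Finset.sum_congr rfl fun g _ => this g, Finset.sum_const, Finset.card_univ,
      ← Nat.cast_smul_eq_nsmul ℂ, smul_smul,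
      inv_mul_cancel₀ (by exact_mod_cast Fintype.card_ne_zero), one_smul]
  have hqcomm : ∀ h : G, ∀ v, q (V.ρ h v) = V.ρ h (q v) := by
    intro h v
    rw [hqapp, hqapp, map_smul, map_sum]
    congr 1
    refine Fintype.sum_bijective (· * h) (Group.mulRight_bijective h) _ _ fun g => ?_
    have e1 : V.ρ (g * h) v = V.ρ g (V.ρ h v) := rho_mul_apply V g h v
    have e2 : ∀ x, V.ρ h (V.ρ (g * h)⁻¹ x) = V.ρ g⁻¹ x := by
      intro x
      rw [← rho_mul_apply, mul_inv_rev, ← mul_assoc, mul_inv_cancel, one_mul]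
    rw [e1, e2]
  refine ⟨LinearMap.ker (q.codRestrict U hqmem), ?_, ?_⟩
  · intro g x hx
    rw [LinearMap.mem_ker] at hx ⊢
    have hx' : q x = 0 := congrArg (Submodule.subtype U) hx
    ext
    simp only [LinearMap.codRestrict_apply, hqcomm g x, hx', map_zero, ZeroMemClass.coe_zero]
  · exact LinearMap.isCompl_of_proj (fun u => Subtype.ext (hqfix u u.2))

/-- A representation with no nontrivial invariant subspaces is simple. -/
lemma simple_of_no_invariants (E : FDRep ℂ G) (hnt : Nontrivial E)
    (hmin : ∀ U : Submodule ℂ E, (∀ g, ∀ x ∈ U, E.ρ g x ∈ U) → U = ⊥ ∨ U = ⊤) : Simple E := by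
  constructor
  intro Y f hmono
  constructor
  · intro hiso h0
    obtain ⟨x, hx⟩ := exists_ne (0 : E)
    have h1 : CategoryTheory.inv f ≫ f = 𝟙 E := IsIso.inv_hom_id f
    have hf0 : (f.hom.hom.hom : Y →ₗ[ℂ] E) = 0 := by rw [h0]; rfl
    have h2 : (f.hom.hom.hom : Y →ₗ[ℂ] E) (((CategoryTheory.inv f).hom.hom.hom : E →ₗ[ℂ] Y) x) = x :=
      congrArg (fun (φ : E ⟶ E) => (φ.hom.hom.hom : E →ₗ[ℂ] E) x) h1
    rw [hf0] at h2
    exact hx (by simpa using h2.symm)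
  · intro hf
    set fl : Y →ₗ[ℂ] E := f.hom.hom.hom with hfl
    have hcomm : ∀ (g : G) (y : Y), fl (Y.ρ g y) = E.ρ g (fl y) := by
      intro g y
      exact congrArg (fun φ => φ.hom.hom y) (f.comm g)
    have hKinv : ∀ g, ∀ x ∈ LinearMap.ker fl, Y.ρ g x ∈ LinearMap.ker fl := by
      intro g x hx
      rw [LinearMap.mem_ker] at hx ⊢
      rw [hcomm, hx, map_zero]
    have hinj : Function.Injective fl := by
      rw [← LinearMap.ker_eq_bot]
      rw [Submodule.eq_bot_iff]
      intro x hx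
      have hcomp : subIncl Y _ hKinv ≫ f = (0 : subRep Y _ hKinv ⟶ Y) ≫ f := by
        rw [Limits.zero_comp]
        apply Action.Hom.ext
        apply FGModuleCat.hom_ext
        apply LinearMap.ext
        intro z
        exact z.2
      rw [cancel_mono] at hcomp
      have := congrArg (fun (φ : subRep Y _ hKinv ⟶ Y) => (φ.hom.hom.hom : _ →ₗ[ℂ] Y) ⟨x, hx⟩) hcomp
      exact this
    have hRinv : ∀ g, ∀ x ∈ LinearMap.range fl, E.ρ g x ∈ LinearMap.range fl := by
      rintro g x ⟨y, rfl⟩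
      exact ⟨Y.ρ g y, hcomm g y⟩
    have hsurj : Function.Surjective fl := by
      rcases hmin _ hRinv with h | h
      · exfalso
        apply hf
        apply Action.Hom.ext
        apply FGModuleCat.hom_ext
        apply LinearMap.ext
        intro y
        have : fl y ∈ LinearMap.range fl := ⟨y, rfl⟩
        rw [h, Submodule.mem_bot] at this
        exact this
      · rw [← LinearMap.range_eq_top]; exact h
    set e := LinearEquiv.ofBijective fl ⟨hinj, hsurj⟩ with he
    have hsymm : ∀ g : G, (e.symm.toLinearMap).comp (E.ρ g) = (Y.ρ g).comp e.symm.toLinearMap := by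
      intro g
      apply LinearMap.ext
      intro x
      apply hinj
      show fl (e.symm (E.ρ g x)) = fl (Y.ρ g (e.symm x))
      rw [hcomm]
      have : ∀ z, fl (e.symm z) = z := fun z => e.apply_symm_apply z
      rw [this, this]
    refine ⟨⟨mkHom e.symm.toLinearMap hsymm, ?_, ?_⟩⟩
    · apply Action.Hom.ext; apply FGModuleCat.hom_ext; apply LinearMap.ext; intro y
      show e.symm (fl y) = y
      exact e.symm_apply_apply y
    · apply Action.Hom.ext; apply FGModuleCat.hom_ext; apply LinearMap.ext; intro x
      show fl (e.symm x) = x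
      exact e.apply_symm_apply x

/-- A simple representation is nontrivial. -/
lemma simple_nontrivial (W : FDRep ℂ G) (hs : Simple W) : Nontrivial W := by
  haveI := hs
  have hfr : finrank ℂ (W ⟶ W) = 1 := by
    rw [FDRep.finrank_hom_simple_simple W W, if_pos ⟨Iso.refl W⟩]
  by_contra h
  have hsub : Subsingleton W := not_nontrivial_iff_subsingleton.mp h
  have : Subsingleton (W ⟶ W) := by
    constructor
    intro a b
    apply Action.Hom.ext
    apply FGModuleCat.hom_ext
    apply LinearMap.ext
    intro x
    exact @Subsingleton.elim _ hsub _ _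
  rw [finrank_zero_of_subsingleton] at hfr
  omega

/-- Schur: the averaged operator attached to a class function orthogonal to the character
of a simple representation vanishes. -/
lemma schur_vanish (W : FDRep ℂ G) (hsW : Simple W) (f : G → ℂ)
    (hclass : ∀ g h : G, f (h * g * h⁻¹) = f g)
    (horth : ∑ g : G, f g * W.character g⁻¹ = 0) (v : W) :
    ∑ g : G, f g • W.ρ g⁻¹ v = 0 := by
  haveI := hsW
  have hfr : finrank ℂ (W ⟶ W) = 1 := by
    rw [FDRep.finrank_hom_simple_simple W W, if_pos ⟨Iso.refl W⟩]
  have hnt : Nontrivial W := simple_nontrivial W hsW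
  set T : W →ₗ[ℂ] W := ∑ g : G, f g • (W.ρ g⁻¹ : W →ₗ[ℂ] W) with hT
  have hTapp : ∀ w : W, T w = ∑ g : G, f g • W.ρ g⁻¹ w := by
    intro w
    rw [hT]
    simp [LinearMap.sum_apply]
  have hTcomm : ∀ h : G, T.comp (W.ρ h) = (W.ρ h).comp T := by
    intro h
    apply LinearMap.ext
    intro w
    simp only [LinearMap.comp_apply, hTapp, map_sum, map_smul]
    refine Fintype.sum_bijective (fun g => h⁻¹ * g * h) (by
      refine ⟨fun a b hab => ?_, fun b => ⟨h * b * h⁻¹, by group⟩⟩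
      have := congrArg (fun z => h * z * h⁻¹) hab
      simpa [mul_assoc] using this) _ _ fun g => ?_
    have h1 : f (h⁻¹ * g * h) = f g := by
      have := hclass g h⁻¹
      simpa using this
    rw [h1]
    congr 1
    rw [← rho_mul_apply, ← rho_mul_apply]
    congr 1
    group
  set Θ : W ⟶ W := mkHom T hTcomm with hΘ
  have hid : (𝟙 W : W ⟶ W) ≠ 0 := by
    intro h
    obtain ⟨x, hx⟩ := exists_ne (0 : W)
    have := congrArg (fun (φ : W ⟶ W) => (φ.hom.hom.hom : W →ₗ[ℂ] W) x) h
    exact hx this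
  obtain ⟨c, hc⟩ := (finrank_eq_one_iff_of_nonzero' (𝟙 W : W ⟶ W) hid).mp hfr Θ
  have htrace : LinearMap.trace ℂ W T = ∑ g : G, f g * W.character g⁻¹ := by
    rw [hT, map_sum]
    congr 1
    ext g
    rw [map_smul]
    rfl
  have htrace0 : LinearMap.trace ℂ W T = 0 := htrace.trans horth
  have hhom : T = c • LinearMap.id (R := ℂ) (M := W) := by
    have := congrArg (fun (φ : W ⟶ W) => (φ.hom.hom.hom : W →ₗ[ℂ] W)) hc
    exact this.symm
  have hc0 : c = 0 := by
    rw [hhom, map_smul] at htrace0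
    have : LinearMap.trace ℂ W (LinearMap.id) = (finrank ℂ W : ℂ) := LinearMap.trace_id ℂ W
    rw [this] at htrace0
    have hd : (finrank ℂ W : ℂ) ≠ 0 := by
      have hpos : 0 < finrank ℂ W := finrank_pos
      exact_mod_cast hpos.ne'
    rcases smul_eq_zero.mp htrace0 with h | h
    · exact h
    · exact absurd h hd
  rw [← hTapp]
  rw [hhom, hc0, zero_smul]
  rfl

/-- The left regular representation on `G → ℂ`. -/
def regρ : Representation ℂ G (G → ℂ) where
  toFun g := LinearMap.funLeft ℂ ℂ (fun v => g⁻¹ * v)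
  map_one' := by
    apply LinearMap.ext; intro x; funext v
    simp [LinearMap.funLeft]
  map_mul' g h := by
    apply LinearMap.ext; intro x; funext v
    simp [LinearMap.funLeft, Module.End.mul_apply, mul_assoc]

/-- The left regular representation as an `FDRep`. -/
def regRep : FDRep ℂ G := FDRep.of regρ

lemma zero_test (f : G → ℂ)
    (hvan : ∀ v : regRep (G := G), ∑ g : G, f g • regRep.ρ g⁻¹ v = 0) (a : G) : f a = 0 := by
  set ev : regRep (G := G) →ₗ[ℂ] ℂ :=
    { toFun := fun x => (x : G → ℂ) a⁻¹
      map_add' := fun x y => rfl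
      map_smul' := fun c x => rfl } with hev
  have h0 := hvan (Pi.single 1 1)
  have h1 := congrArg ev h0
  rw [map_sum, map_zero] at h1
  have h2 : ∀ g : G, ev (f g • regRep.ρ g⁻¹ (Pi.single 1 1)) = f g * (if g = a then 1 else 0) := by
    intro g
    rw [map_smul]
    have h3 : ev (regRep.ρ g⁻¹ (Pi.single 1 1))
        = Pi.single (M := fun _ : G => ℂ) (1:G) (1:ℂ) (g⁻¹⁻¹ * a⁻¹) := by rfl
    rw [h3, Pi.single_apply, smul_eq_mul]
    simp only [inv_inv, mul_inv_eq_one]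
  rw [Finset.sum_congr rfl fun g _ => h2 g] at h1
  simpa using h1

/-- Averaging a character over a subgroup gives a natural number (times the subgroup order). -/
lemma res_char_sum_nat (H : Subgroup G) (V : FDRep ℂ G) :
    ∃ m : ℕ, ∑ h : H, V.character (h : G) = (m : ℂ) := by
  letI : Invertible ((Fintype.card H : ℂ)) :=
    invertibleOfNonzero (by exact_mod_cast (Fintype.card_ne_zero (α := H)))
  set resV : FDRep ℂ H := FDRep.of (V.ρ.comp H.subtype) with hres
  have hchar : ∀ h : H, resV.character h = V.character (h : G) := fun h => rfl
  have havg := FDRep.average_char_eq_finrank_invariants resV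
  refine ⟨Fintype.card H * finrank ℂ (Representation.invariants resV.ρ), ?_⟩
  have h1 : ∑ h : H, V.character (h : G) = ∑ h : H, resV.character h :=
    Finset.sum_congr rfl fun h _ => (hchar h).symm
  rw [h1]
  have h2 : ∑ h : H, resV.character h
      = (Fintype.card H : ℂ) • (⅟ (Fintype.card H : ℂ) • ∑ h : H, resV.character h) := by
    rw [smul_smul, mul_invOf_self, one_smul]
  rw [Nat.card_eq_fintype_card, ← invOf_eq_inv, ← smul_eq_mul] at havg
  rw [h2, havg]
  push_cast
  rw [smul_eq_mul]

section Family

variable {ι : Type} [Fintype ι] (ρ : ι → FDRep ℂ G) (hirr : ∀ i, Simple (ρ i))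
  (hdisj : ∀ i j : ι, Nonempty (ρ i ≅ ρ j) → i = j)
  (hcomplete : ∀ V : FDRep ℂ G, Simple V → ∃ i, Nonempty (V ≅ ρ i))

include hirr hdisj in
lemma row_orth (i j : ι) :
    ∑ g : G, (ρ i).character g * (ρ j).character g⁻¹
      = if i = j then (Fintype.card G : ℂ) else 0 := by
  letI invG : Invertible ((Fintype.card G : ℂ)) :=
    invertibleOfNonzero (by exact_mod_cast (Fintype.card_ne_zero (α := G)))
  haveI := hirr i
  haveI := hirr j
  have h : ⅟ (Fintype.card G : ℂ) • ∑ g : G, (ρ i).character g * (ρ j).character g⁻¹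
      = if Nonempty (ρ i ≅ ρ j) then (1:ℂ) else 0 := by
    have := FDRep.char_orthonormal (ρ i) (ρ j)
    rw [Nat.card_eq_fintype_card, ← invOf_eq_inv, ← smul_eq_mul] at this
    exact this
  have h2 : ∑ g : G, (ρ i).character g * (ρ j).character g⁻¹
      = (Fintype.card G : ℂ) • (if Nonempty (ρ i ≅ ρ j) then (1:ℂ) else 0) := by
    rw [← h, smul_smul]
    rw [mul_invOf_self]
    rw [one_smul]
  rw [h2]
  by_cases hij : i = j
  · subst hij
    rw [if_pos ⟨Iso.refl (ρ i)⟩, if_pos rfl, smul_eq_mul, mul_one]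
  · rw [if_neg (fun hne => hij (hdisj i j hne)), if_neg hij, smul_zero]

include hirr hcomplete in
lemma vanish_simple (f : G → ℂ) (hclass : ∀ g h : G, f (h * g * h⁻¹) = f g)
    (horth : ∀ i, ∑ g : G, f g * (ρ i).character g⁻¹ = 0)
    (V : FDRep ℂ G) (hs : Simple V) (v : V) :
    ∑ g : G, f g • V.ρ g⁻¹ v = 0 := by
  obtain ⟨i, ⟨e⟩⟩ := hcomplete V hs
  set φ : V →ₗ[ℂ] ρ i := e.hom.hom.hom.hom with hφ
  have hφcomm : ∀ (g : G) (x : V), φ (V.ρ g x) = (ρ i).ρ g (φ x) := by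
    intro g x
    exact congrArg (fun ψ => ψ.hom.hom x) (e.hom.comm g)
  have hinj : Function.Injective φ := by
    have h1 : ∀ x : V, (e.inv.hom.hom.hom : ρ i →ₗ[ℂ] V) (φ x) = x := by
      intro x
      exact congrArg (fun (ψ : V ⟶ V) => (ψ.hom.hom.hom : V →ₗ[ℂ] V) x) e.hom_inv_id
    exact Function.LeftInverse.injective h1
  apply hinj
  rw [map_sum, map_zero]
  have : ∀ g : G, φ (f g • V.ρ g⁻¹ v) = f g • (ρ i).ρ g⁻¹ (φ v) := by
    intro g
    rw [map_smul, hφcomm]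
  rw [Finset.sum_congr rfl fun g _ => this g]
  exact schur_vanish (ρ i) (hirr i) f hclass (horth i) (φ v)

include hirr hcomplete in
lemma vanish_all (f : G → ℂ) (hclass : ∀ g h : G, f (h * g * h⁻¹) = f g)
    (horth : ∀ i, ∑ g : G, f g * (ρ i).character g⁻¹ = 0) :
    ∀ (n : ℕ) (V : FDRep ℂ G), finrank ℂ V ≤ n →
    ∀ v : V, ∑ g : G, f g • V.ρ g⁻¹ v = 0 := by
  intro n
  induction n with
  | zero =>
    intro V hV v
    have hsub : Subsingleton V := by
      have : finrank ℂ V = 0 := Nat.le_zero.mp hV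
      exact (Module.finrank_zero_iff (R := ℂ) (M := V)).mp this
    exact @Subsingleton.elim _ hsub _ _
  | succ n ih =>
    intro V hV v
    by_cases hnt : Nontrivial V
    swap
    · have hsub : Subsingleton V := not_nontrivial_iff_subsingleton.mp hnt
      exact @Subsingleton.elim _ hsub _ _
    have hex : ∃ k, ∃ U : Submodule ℂ V, (∀ g, ∀ x ∈ U, V.ρ g x ∈ U) ∧ U ≠ ⊥ ∧ finrank ℂ U = k :=
      ⟨finrank ℂ (⊤ : Submodule ℂ V), ⊤, fun _ _ _ => Submodule.mem_top,
        bot_ne_top.symm, rfl⟩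
    classical
    set k₀ := Nat.find hex with hk₀
    obtain ⟨U, hU, hUne, hUrank⟩ := Nat.find_spec hex
    have hsimple : Simple (subRep V U hU) := by
      apply simple_of_no_invariants
      · have : Nontrivial U := Submodule.nontrivial_iff_ne_bot.mpr hUne
        exact this
      · intro U₀ hU₀
        set U₁ : Submodule ℂ V := U₀.map U.subtype with hU₁def
        have hU₁inv : ∀ g, ∀ x ∈ U₁, V.ρ g x ∈ U₁ := by
          rintro g x ⟨y, hy, rfl⟩
          exact ⟨(subRep V U hU).ρ g y, hU₀ g y hy, subRep_ρ_apply V U hU g y⟩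
        by_cases hbot : U₁ = ⊥
        · left
          rw [Submodule.eq_bot_iff]
          intro y hy
          have hymem : U.subtype y ∈ U₁ := ⟨y, hy, rfl⟩
          rw [hbot, Submodule.mem_bot] at hymem
          exact Subtype.ext hymem
        · right
          have hle : U₁ ≤ U := by
            rintro x ⟨y, _, rfl⟩
            exact y.2
          have h1 : k₀ ≤ finrank ℂ U₁ := Nat.find_min' hex ⟨U₁, hU₁inv, hbot, rfl⟩
          have h2 : finrank ℂ U₁ ≤ finrank ℂ U := Submodule.finrank_mono hle
          have heq : U₁ = U := Submodule.eq_of_le_of_finrank_le hle (by omega)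
          rw [Submodule.eq_top_iff']
          intro y
          have hymem : (U.subtype y : V) ∈ U₁ := by
            rw [heq]; exact y.2
          obtain ⟨z, hz, hzeq⟩ := hymem
          have hzy : z = y := Subtype.ext hzeq
          rwa [← hzy]
    obtain ⟨W, hW, hcompl⟩ := exists_invariant_compl V U hU
    have hsumtop : U ⊔ W = ⊤ := hcompl.codisjoint.eq_top
    have hvmem : v ∈ U ⊔ W := by rw [hsumtop]; exact Submodule.mem_top
    obtain ⟨u, hu, w, hw, huw⟩ := Submodule.mem_sup.mp hvmem
    have hUzero : ∑ g : G, f g • V.ρ g⁻¹ u = 0 := by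
      have h0 : ∑ g : G, f g • (subRep V U hU).ρ g⁻¹ (⟨u, hu⟩ : U) = 0 :=
        vanish_simple ρ hirr hcomplete f hclass horth _ hsimple ⟨u, hu⟩
      have h1 := congrArg U.subtype h0
      erw [map_sum, map_zero] at h1
      have h2 : ∀ g : G, U.subtype (f g • (subRep V U hU).ρ g⁻¹ (⟨u, hu⟩ : U))
          = f g • V.ρ g⁻¹ u := by
        intro g
        erw [map_smul, subRep_ρ_apply]
      rw [Finset.sum_congr rfl fun g _ => h2 g] at h1
      exact h1
    have hWrank : finrank ℂ W ≤ n := by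
      have hadd : finrank ℂ U + finrank ℂ W = finrank ℂ V :=
        Submodule.finrank_add_eq_of_isCompl hcompl
      have hUpos : 0 < finrank ℂ U := by
        have : Nontrivial U := Submodule.nontrivial_iff_ne_bot.mpr hUne
        exact finrank_pos
      omega
    have hWzero : ∑ g : G, f g • V.ρ g⁻¹ w = 0 := by
      have h0 : ∑ g : G, f g • (subRep V W hW).ρ g⁻¹ (⟨w, hw⟩ : W) = 0 :=
        ih (subRep V W hW) hWrank ⟨w, hw⟩
      have h1 := congrArg W.subtype h0
      erw [map_sum, map_zero] at h1
      have h2 : ∀ g : G, W.subtype (f g • (subRep V W hW).ρ g⁻¹ (⟨w, hw⟩ : W))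
          = f g • V.ρ g⁻¹ w := by
        intro g
        erw [map_smul, subRep_ρ_apply]
      rw [Finset.sum_congr rfl fun g _ => h2 g] at h1
      exact h1
    have hsplit : ∀ g : G, f g • V.ρ g⁻¹ v = f g • V.ρ g⁻¹ u + f g • V.ρ g⁻¹ w := by
      intro g
      rw [← huw, map_add, smul_add]
    rw [Finset.sum_congr rfl fun g _ => hsplit g, Finset.sum_add_distrib, hUzero, hWzero,
      add_zero]

include hirr hcomplete in
lemma class_fun_zero (f : G → ℂ) (hclass : ∀ g h : G, f (h * g * h⁻¹) = f g)
    (horth : ∀ i, ∑ g : G, f g * (ρ i).character g⁻¹ = 0) : ∀ a : G, f a = 0 := by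
  intro a
  refine zero_test f (fun v => ?_) a
  exact vanish_all ρ hirr hcomplete f hclass horth (finrank ℂ (regRep (G := G))) regRep le_rfl v

include hirr hdisj hcomplete in
lemma col_orth (t s : G) :
    ∑ i : ι, (ρ i).character s * (ρ i).character t⁻¹ =
      if IsConj t s then (Fintype.card G : ℂ) / (Fintype.card {x : G // IsConj t x} : ℂ)
      else 0 := by
  set c : ℂ := (Fintype.card G : ℂ) / (Fintype.card {x : G // IsConj t x} : ℂ) with hc
  set F : G → ℂ := fun g =>
    (if IsConj t g then c else 0) - ∑ i : ι, (ρ i).character g * (ρ i).character t⁻¹ with hF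
  have hclass : ∀ g h : G, F (h * g * h⁻¹) = F g := by
    intro g h
    rw [hF]
    simp only
    have h1 : IsConj t (h * g * h⁻¹) ↔ IsConj t g := by
      constructor
      · intro hh
        exact hh.trans (isConj_iff.mpr ⟨h⁻¹, by group⟩)
      · intro hh
        exact hh.trans (isConj_iff.mpr ⟨h, rfl⟩)
    rw [if_congr h1 rfl rfl]
    congr 1
    exact Finset.sum_congr rfl fun i _ => by rw [FDRep.char_conj]
  have hcharconj : ∀ (j : ι) (g : G), IsConj t g →
      (ρ j).character g⁻¹ = (ρ j).character t⁻¹ := by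
    intro j g h
    obtain ⟨u, hu⟩ := isConj_iff.mp h
    rw [← hu, show (u * t * u⁻¹)⁻¹ = u * t⁻¹ * u⁻¹ by group, FDRep.char_conj]
  have hNne : ((Fintype.card {x : G // IsConj t x} : ℂ)) ≠ 0 := by
    have : 0 < Fintype.card {x : G // IsConj t x} :=
      Fintype.card_pos_iff.mpr ⟨⟨t, IsConj.refl t⟩⟩
    exact_mod_cast this.ne'
  have horth : ∀ j : ι, ∑ g : G, F g * (ρ j).character g⁻¹ = 0 := by
    intro j
    have hsplit : ∑ g : G, F g * (ρ j).character g⁻¹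
        = (∑ g : G, (if IsConj t g then c else 0) * (ρ j).character g⁻¹)
          - ∑ g : G, (∑ i : ι, (ρ i).character g * (ρ i).character t⁻¹)
              * (ρ j).character g⁻¹ := by
      rw [← Finset.sum_sub_distrib]
      exact Finset.sum_congr rfl fun g _ => by rw [hF]; ring
    rw [hsplit]
    have hA : ∑ g : G, (if IsConj t g then c else 0) * (ρ j).character g⁻¹
        = (Fintype.card G : ℂ) * (ρ j).character t⁻¹ := by
      have h1 : ∀ g : G, (if IsConj t g then c else 0) * (ρ j).character g⁻¹
          = if IsConj t g then c * (ρ j).character t⁻¹ else 0 := by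
        intro g
        by_cases h : IsConj t g
        · rw [if_pos h, if_pos h, hcharconj j g h]
        · rw [if_neg h, if_neg h, zero_mul]
      rw [Finset.sum_congr rfl fun g _ => h1 g]
      rw [Finset.sum_ite, Finset.sum_const, Finset.sum_const_zero, add_zero]
      rw [← Fintype.card_subtype, nsmul_eq_mul]
      rw [hc]
      have hre : ((Fintype.card {x : G // IsConj t x} : ℂ))
          * ((Fintype.card G : ℂ) / (Fintype.card {x : G // IsConj t x} : ℂ)
            * (ρ j).character t⁻¹)
          = (Fintype.card G : ℂ) / (Fintype.card {x : G // IsConj t x} : ℂ)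
            * (Fintype.card {x : G // IsConj t x} : ℂ) * (ρ j).character t⁻¹ := by ring
      rw [hre, div_mul_cancel₀ _ hNne]
    have hB : ∑ g : G, (∑ i : ι, (ρ i).character g * (ρ i).character t⁻¹)
        * (ρ j).character g⁻¹ = (Fintype.card G : ℂ) * (ρ j).character t⁻¹ := by
      have h1 : ∀ g : G, (∑ i : ι, (ρ i).character g * (ρ i).character t⁻¹)
          * (ρ j).character g⁻¹
          = ∑ i : ι, (ρ i).character t⁻¹ * ((ρ i).character g * (ρ j).character g⁻¹) := by
        intro g
        rw [Finset.sum_mul]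
        exact Finset.sum_congr rfl fun i _ => by ring
      rw [Finset.sum_congr rfl fun g _ => h1 g, Finset.sum_comm]
      have h2 : ∀ i : ι, ∑ g : G, (ρ i).character t⁻¹
          * ((ρ i).character g * (ρ j).character g⁻¹)
          = (ρ i).character t⁻¹ * (if i = j then (Fintype.card G : ℂ) else 0) := by
        intro i
        rw [← Finset.mul_sum, row_orth ρ hirr hdisj i j]
      rw [Finset.sum_congr rfl fun i _ => h2 i]
      rw [Finset.sum_congr rfl fun i (_ : i ∈ Finset.univ) => mul_ite_zero ..]
      rw [Finset.sum_ite_eq' Finset.univ j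
        (fun i => (ρ i).character t⁻¹ * (Fintype.card G : ℂ))]
      rw [if_pos (Finset.mem_univ j), mul_comm]
    rw [hA, hB, sub_self]
  have hFs := class_fun_zero ρ hirr hcomplete F hclass horth s
  rw [hF] at hFs
  simp only at hFs
  have := sub_eq_zero.mp hFs
  rw [← this]

end Family

end PlancherelAux

end PlancherelAux

set_option maxHeartbeats 1000000 in
/-- For a finite group `G`, a complete family of pairwise non-isomorphic
irreducible complex representations, a subgroup `H ≤ G`, and
`X_H = ⟨Res_H χ_ρ, 1⟩_H / d_ρ`, the Plancherel probability that `X_H = 0` satisfies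
`Pr_ρ[X_H = 0] ≤ |H| · Σ_{h ∈ H, h ≠ 1} 1/|h^G|`. -/
theorem plancherel_prob_trivial_multiplicity_zero_le
    {G : Type} [Group G] [Fintype G]
    (ι : Type) [Fintype ι] (ρ : ι → FDRep ℂ G)
    (hirr : ∀ i, Simple (ρ i))
    (hdisj : ∀ i j : ι, Nonempty (ρ i ≅ ρ j) → i = j)
    (hcomplete : ∀ V : FDRep ℂ G, Simple V → ∃ i, Nonempty (V ≅ ρ i))
    (H : Subgroup G) :
    ∑ i ∈ Finset.univ.filter (fun i : ι =>
        ((Fintype.card H : ℂ)⁻¹ * ∑ h : H, (ρ i).character (h : G)) /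
          (Module.finrank ℂ (ρ i) : ℂ) = 0),
        ((Module.finrank ℂ (ρ i) : ℝ) ^ 2 / (Fintype.card G : ℝ))
      ≤ (Fintype.card H : ℝ) *
          ∑ h ∈ Finset.univ.filter (fun h : H => (h : G) ≠ 1),
            (1 : ℝ) / (Fintype.card {x : G // IsConj (h : G) x} : ℝ) := by
  classical
  open Module PlancherelAux in
  set d : ι → ℕ := fun i => finrank ℂ (ρ i) with hd
  choose N hNs using fun i => PlancherelAux.res_char_sum_nat H (ρ i)
  set t : ι → ℝ := fun i => (N i : ℝ) - (d i : ℝ) with ht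
  set filt := Finset.univ.filter (fun h : H => (h : G) ≠ 1) with hfilt
  set D := Finset.univ.filter (fun i : ι =>
      ((Fintype.card H : ℂ)⁻¹ * ∑ h : H, (ρ i).character (h : G)) /
        (Module.finrank ℂ (ρ i) : ℂ) = 0) with hD
  have hdpos : ∀ i, 0 < d i := fun i => by
    have := PlancherelAux.simple_nontrivial (ρ i) (hirr i)
    exact finrank_pos
  have hccard : ∀ h : H, (0:ℝ) < (Fintype.card {x : G // IsConj (h : G) x} : ℝ) := by
    intro h
    have h1 : Nonempty {x : G // IsConj (h : G) x} := ⟨⟨(h : G), IsConj.refl _⟩⟩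
    have h2 : 0 < Fintype.card {x : G // IsConj (h : G) x} := Fintype.card_pos_iff.mpr h1
    exact_mod_cast h2
  have hGpos : (0:ℝ) < (Fintype.card G : ℝ) := by exact_mod_cast Fintype.card_pos
  have hsum_split : ∀ i, (∑ h : H, (ρ i).character (h : G))
      = (∑ h ∈ filt, (ρ i).character (h : G)) + (d i : ℂ) := by
    intro i
    rw [← Finset.sum_filter_add_sum_filter_not Finset.univ (fun h : H => (h : G) ≠ 1)]
    congr 1
    have h1 : Finset.univ.filter (fun h : H => ¬((h : G) ≠ 1)) = {1} := by
      ext h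
      simp [OneMemClass.coe_eq_one]
    rw [h1, Finset.sum_singleton]
    show (ρ i).character ((1 : H) : G) = (d i : ℂ)
    rw [OneMemClass.coe_one, FDRep.char_one]
  have hT : ∀ i, (∑ h ∈ filt, (ρ i).character (h : G)) = ((t i : ℝ) : ℂ) := by
    intro i
    have h1 : (∑ h ∈ filt, (ρ i).character (h : G)) + (d i : ℂ) = (N i : ℂ) := by
      rw [← hsum_split i, hNs i]
    have h2 := eq_sub_of_add_eq h1
    rw [h2, ht]
    push_cast
    ring
  have hTinv : ∀ i, (∑ h ∈ filt, (ρ i).character ((h : G))⁻¹) = ((t i : ℝ) : ℂ) := by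
    intro i
    rw [← hT i]
    refine Finset.sum_equiv (Equiv.inv H) ?_ ?_
    · intro h
      simp [hfilt]
    · intro h hh
      show (ρ i).character ((h : G))⁻¹ = (ρ i).character ((h⁻¹ : H) : G)
      rfl
  have hCC : ((∑ i : ι, (t i)^2 : ℝ) : ℂ)
      = ∑ h' ∈ filt, ∑ h ∈ filt,
          (if IsConj (h : G) (h' : G) then
            (Fintype.card G : ℂ) / (Fintype.card {x : G // IsConj (h : G) x} : ℂ) else 0) := by
    push_cast
    calc ∑ i : ι, ((t i : ℝ) : ℂ)^2
        = ∑ i : ι, (∑ h' ∈ filt, (ρ i).character (h' : G))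
            * (∑ h ∈ filt, (ρ i).character ((h : G))⁻¹) := by
          refine Finset.sum_congr rfl fun i _ => ?_
          rw [hT, hTinv]; ring
      _ = ∑ i : ι, ∑ h' ∈ filt, ∑ h ∈ filt,
            (ρ i).character (h' : G) * (ρ i).character ((h : G))⁻¹ := by
          refine Finset.sum_congr rfl fun i _ => ?_
          rw [Finset.sum_mul_sum]
      _ = ∑ h' ∈ filt, ∑ i : ι, ∑ h ∈ filt,
            (ρ i).character (h' : G) * (ρ i).character ((h : G))⁻¹ := Finset.sum_comm
      _ = ∑ h' ∈ filt, ∑ h ∈ filt, ∑ i : ι,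
            (ρ i).character (h' : G) * (ρ i).character ((h : G))⁻¹ := by
          exact Finset.sum_congr rfl fun h' _ => Finset.sum_comm
      _ = ∑ h' ∈ filt, ∑ h ∈ filt,
          (if IsConj (h : G) (h' : G) then
            (Fintype.card G : ℂ) / (Fintype.card {x : G // IsConj (h : G) x} : ℂ) else 0) := by
          refine Finset.sum_congr rfl fun h' _ => Finset.sum_congr rfl fun h _ => ?_
          exact PlancherelAux.col_orth ρ hirr hdisj hcomplete (h : G) (h' : G)
  set R : ℝ := ∑ h' ∈ filt, ∑ h ∈ filt,
      (if IsConj (h : G) (h' : G) then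
        (Fintype.card G : ℝ) / (Fintype.card {x : G // IsConj (h : G) x} : ℝ) else 0) with hR
  have hRC : ((R : ℝ) : ℂ) = ((∑ i : ι, (t i)^2 : ℝ) : ℂ) := by
    rw [hCC, hR]
    push_cast
    refine Finset.sum_congr rfl fun h' _ => Finset.sum_congr rfl fun h _ => ?_
    split_ifs
    · push_cast; ring
    · rfl
  have hRt : ∑ i : ι, (t i)^2 = R := (Complex.ofReal_inj.mp hRC).symm
  have hmem : ∀ i ∈ D, t i = -(d i : ℝ) := by
    intro i hi
    rw [hD, Finset.mem_filter] at hi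
    have hcond := hi.2
    rw [hNs i] at hcond
    have hdne : ((d i : ℕ) : ℂ) ≠ 0 := by
      exact_mod_cast (hdpos i).ne'
    have hHne : ((Fintype.card H : ℂ))⁻¹ ≠ 0 := by
      apply inv_ne_zero
      exact_mod_cast (Fintype.card_ne_zero (α := H))
    rcases div_eq_zero_iff.mp hcond with h | h
    · rcases mul_eq_zero.mp h with h' | h'
      · exact absurd h' hHne
      · have : N i = 0 := by exact_mod_cast h'
        rw [ht]
        simp [this]
    · exact absurd h hdne
  have step1 : ∑ i ∈ D, ((d i : ℝ))^2 ≤ R := by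
    rw [← hRt]
    have h1 : ∑ i ∈ D, ((d i : ℝ))^2 = ∑ i ∈ D, (t i)^2 := by
      refine Finset.sum_congr rfl fun i hi => ?_
      rw [hmem i hi]
      ring
    rw [h1]
    exact Finset.sum_le_sum_of_subset_of_nonneg (Finset.filter_subset _ _)
      (fun i _ _ => sq_nonneg _)
  have step2 : R ≤ ∑ h ∈ filt, (Fintype.card H : ℝ) *
      ((Fintype.card G : ℝ) / (Fintype.card {x : G // IsConj (h : G) x} : ℝ)) := by
    rw [hR, Finset.sum_comm]
    refine Finset.sum_le_sum fun h _ => ?_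
    have hb : ∀ h' ∈ filt,
        (if IsConj (h : G) (h' : G) then
          (Fintype.card G : ℝ) / (Fintype.card {x : G // IsConj (h : G) x} : ℝ) else 0)
        ≤ (Fintype.card G : ℝ) / (Fintype.card {x : G // IsConj (h : G) x} : ℝ) := by
      intro h' _
      split_ifs
      · exact le_rfl
      · positivity
    calc ∑ h' ∈ filt, (if IsConj (h : G) (h' : G) then
            (Fintype.card G : ℝ) / (Fintype.card {x : G // IsConj (h : G) x} : ℝ) else 0)
        ≤ filt.card • ((Fintype.card G : ℝ) / (Fintype.card {x : G // IsConj (h : G) x} : ℝ)) :=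
          Finset.sum_le_card_nsmul _ _ _ hb
      _ ≤ (Fintype.card H) •
            ((Fintype.card G : ℝ) / (Fintype.card {x : G // IsConj (h : G) x} : ℝ)) := by
          refine nsmul_le_nsmul_left (by positivity) ?_
          calc filt.card ≤ Finset.univ.card := Finset.card_filter_le _ _
            _ = Fintype.card H := Finset.card_univ
      _ = (Fintype.card H : ℝ) *
            ((Fintype.card G : ℝ) / (Fintype.card {x : G // IsConj (h : G) x} : ℝ)) := by
          rw [nsmul_eq_mul]
  calc ∑ i ∈ D, ((d i : ℝ) ^ 2 / (Fintype.card G : ℝ))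
      = (∑ i ∈ D, ((d i : ℝ))^2) / (Fintype.card G : ℝ) := by rw [Finset.sum_div]
    _ ≤ (∑ h ∈ filt, (Fintype.card H : ℝ) *
          ((Fintype.card G : ℝ) / (Fintype.card {x : G // IsConj (h : G) x} : ℝ)))
          / (Fintype.card G : ℝ) := by
        gcongr
        exact step1.trans step2
    _ = (Fintype.card H : ℝ) * ∑ h ∈ filt,
          (1 : ℝ) / (Fintype.card {x : G // IsConj (h : G) x} : ℝ) := by
        rw [Finset.sum_div, Finset.mul_sum]
        refine Finset.sum_congr rfl fun h _ => ?_
        rw [mul_div_assoc, div_right_comm, div_self hGpos.ne']
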